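/- Let R be a commutative ring and S a multiplicative subset of R. If R is a u-S-PIR, then there exists an element s ∈ S such that the localization R_s of R at the multiplicative set {1, s, s², …} of powers of s is a principal ideal ring (every ideal of R_s is principal). -/

import Mathlib

/-- A commutative ring `R` is a uniformly `S`-principal ideal ring (`u`-`S`-PIR) if there exists
`s ∈ S` such that for every ideal `I` of `R` there is `a ∈ I` with `s • I ⊆ (a)`. -/
def IsUSPIR (R : Type*) [CommRing R] (S : Submonoid R) : Prop :=
  ∃ s ∈ S, ∀ I : Ideal R, ∃ a ∈ I, ∀ x ∈ I, s * x ∈ Ideal.span {a}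

/-- If `R` is a `u`-`S`-PIR, then there exists `s ∈ S` such that the localization of `R`
at the powers of `s` is a principal ideal ring. -/
theorem exists_localization_powers_isPrincipalIdealRing_of_isUSPIR
    (R : Type*) [CommRing R] (S : Submonoid R) (h : IsUSPIR R S) :
    ∃ s ∈ S, IsPrincipalIdealRing (Localization (Submonoid.powers s)) := by
  obtain ⟨s, hsS, hs⟩ := h
  refine ⟨s, hsS, ⟨fun J => ?_⟩⟩
  let L := Localization (Submonoid.powers s)
  let f : R →+* L := algebraMap R L
  obtain ⟨a, haI, ha⟩ := hs (J.comap f)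
  refine ⟨⟨f a, le_antisymm ?_ ?_⟩⟩
  · intro z hz
    obtain ⟨⟨r, t⟩, hrt⟩ := IsLocalization.mk'_surjective (Submonoid.powers s) z
    dsimp only at hrt
    have hspec : f (t:R) * IsLocalization.mk' L r t = f r := IsLocalization.mk'_spec' L r t
    have hrI : r ∈ J.comap f := by
      show f r ∈ J
      rw [← hspec, hrt]
      exact J.mul_mem_left _ hz
    obtain ⟨c, hc⟩ := Ideal.mem_span_singleton.mp (ha r hrI)
    have hsu : IsUnit (f s) := IsLocalization.map_units L ⟨s, Submonoid.mem_powers s⟩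
    have hspec' : f (t:R) * IsLocalization.mk' L c t = f c := IsLocalization.mk'_spec' L c t
    have htu : IsUnit (f (t : R)) := IsLocalization.map_units L t
    have key : f s * z = f a * IsLocalization.mk' L c t := by
      apply htu.mul_left_cancel
      rw [← hrt]
      calc f (t : R) * (f s * IsLocalization.mk' L r t)
          = f s * (IsLocalization.mk' L r t * f t) := by ring
        _ = f s * (f (t:R) * IsLocalization.mk' L r t) := by ring
        _ = f (s * r) := by rw [hspec, map_mul]
        _ = f a * f c := by rw [hc, map_mul]
        _ = f a * (f (t:R) * IsLocalization.mk' L c t) := by rw [hspec']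
        _ = f (t : R) * (f a * IsLocalization.mk' L c t) := by ring
    have hz' : z = f a * (IsLocalization.mk' L c t * ↑hsu.unit⁻¹) := by
      apply hsu.mul_left_cancel
      rw [key]
      calc f a * IsLocalization.mk' L c t
          = f a * (IsLocalization.mk' L c t * (↑hsu.unit⁻¹ * f s)) := by
            rw [IsUnit.val_inv_mul, mul_one]
        _ = f s * (f a * (IsLocalization.mk' L c t * ↑hsu.unit⁻¹)) := by ring
    rw [hz']
    exact Ideal.mem_span_singleton.mpr ⟨_, rfl⟩
  · exact (Submodule.span_singleton_le_iff_mem _ _).mpr haI
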